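/- Let F be either of the functions L or R, and set a_F(x) = (F(x) − 1)·x. Then: (a) a_F is strictly decreasing on the interval ((ln π)/2, ∞); (b) a_F(x) tends to (ln π)/2 as x → ∞. -/

import Mathlib

open Real Filter

noncomputable def L (x : ℝ) : ℝ := Real.pi ^ (1 / (2 * x)) * Real.exp (1 / ((12 * x + 1) * x))

noncomputable def R (x : ℝ) : ℝ := Real.pi ^ (1 / (2 * x)) * Real.exp (1 / (12 * x ^ 2))

lemma phi_mono {s t : ℝ} (hs : 0 < s) (hst : s < t) :
    (Real.exp s - 1) / s < (Real.exp t - 1) / t := by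
  have := strictConvexOn_exp.secant_strict_mono (a := 0) trivial trivial trivial
    hs.ne' (hs.trans hst).ne' hst
  simpa [Real.exp_zero] using this

lemma slope_lim : Tendsto (fun t => (Real.exp t - 1) / t) (nhdsWithin 0 {0}ᶜ) (nhds 1) := by
  have h := Real.hasDerivAt_exp 0
  rw [hasDerivAt_iff_tendsto_slope] at h
  simp only [Real.exp_zero] at h
  refine h.congr' ?_
  filter_upwards with t
  simp [slope_def_field, div_eq_mul_inv]

lemma phi_pos {s : ℝ} (hs : 0 < s) : 0 < (Real.exp s - 1) / s :=
  div_pos (by linarith [Real.add_one_lt_exp hs.ne']) hs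

lemma factored {c w x : ℝ} (hx : x ≠ 0) (hcw : c + w ≠ 0) :
    (Real.exp ((c + w) / x) - 1) * x
      = ((Real.exp ((c + w) / x) - 1) / ((c + w) / x)) * (c + w) := by
  field_simp

lemma key (c : ℝ) (hc : 0 < c) (w : ℝ → ℝ)
    (hwpos : ∀ x, 0 < x → 0 < w x)
    (hanti : ∀ ⦃x y : ℝ⦄, 0 < x → x < y → w y < w x)
    (hw0 : Tendsto w atTop (nhds 0)) :
    StrictAntiOn (fun x => (Real.exp ((c + w x) / x) - 1) * x) (Set.Ioi c) ∧
    Tendsto (fun x => (Real.exp ((c + w x) / x) - 1) * x) atTop (nhds c) := by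
  constructor
  · intro x hx y hy hxy
    simp only [Set.mem_Ioi] at hx hy
    have hx0 : 0 < x := hc.trans hx
    have hy0 : 0 < y := hc.trans hy
    have hwx := hwpos x hx0
    have hwy := hwpos y hy0
    have hwyx : w y < w x := hanti hx0 hxy
    have huy : 0 < (c + w y) / y := by positivity
    have hux : 0 < (c + w x) / x := by positivity
    have huu : (c + w y) / y < (c + w x) / x := by
      rw [div_lt_div_iff₀ hy0 hx0]; nlinarith
    show (Real.exp ((c + w y) / y) - 1) * y < (Real.exp ((c + w x) / x) - 1) * x
    rw [factored hy0.ne' (by linarith), factored hx0.ne' (by linarith)]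
    exact mul_lt_mul' (phi_mono huy huu).le (by linarith) (by linarith) (phi_pos hux)
  · have hu : Tendsto (fun x => (c + w x) / x) atTop (nhds 0) := by
      have := ((tendsto_const_nhds.add hw0).mul tendsto_inv_atTop_zero
        (f := fun x => c + w x))
      simpa [div_eq_mul_inv] using this
    have hu' : Tendsto (fun x => (c + w x) / x) atTop (nhdsWithin 0 {0}ᶜ) := by
      rw [tendsto_nhdsWithin_iff]
      refine ⟨hu, ?_⟩
      filter_upwards [eventually_gt_atTop 0] with x hx
      have := hwpos x hx
      have : 0 < (c + w x) / x := by positivity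
      simpa using this.ne'
    have h1 : Tendsto (fun x => (Real.exp ((c + w x) / x) - 1) / ((c + w x) / x))
        atTop (nhds 1) := slope_lim.comp hu'
    have h2 := h1.mul (tendsto_const_nhds.add hw0 : Tendsto (fun x => c + w x) atTop (nhds (c + 0)))
    rw [one_mul, add_zero] at h2
    refine h2.congr' ?_
    filter_upwards [eventually_gt_atTop 0] with x hx
    have := hwpos x hx
    rw [factored hx.ne' (by linarith)]

lemma eqL {x : ℝ} (hx : 0 < x) :
    L x = Real.exp ((Real.log Real.pi / 2 + 1 / (12 * x + 1)) / x) := by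
  have h1 : (0:ℝ) < 12 * x + 1 := by linarith
  rw [L, Real.rpow_def_of_pos Real.pi_pos, ← Real.exp_add]
  congr 1
  field_simp

lemma eqR {x : ℝ} (hx : 0 < x) :
    R x = Real.exp ((Real.log Real.pi / 2 + 1 / (12 * x)) / x) := by
  rw [R, Real.rpow_def_of_pos Real.pi_pos, ← Real.exp_add]
  congr 1
  field_simp

/-- Proposition 3: for `F = L` or `F = R`, the function `a_F(x) = (F(x) − 1)·x` is strictly
decreasing on `((ln π)/2, ∞)` and tends to `(ln π)/2` as `x → ∞`. -/
theorem aF_strictAnti_and_tendsto (F : ℝ → ℝ) (hF : F = L ∨ F = R) :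
    StrictAntiOn (fun x => (F x - 1) * x) (Set.Ioi (Real.log Real.pi / 2)) ∧
    Tendsto (fun x => (F x - 1) * x) atTop (nhds (Real.log Real.pi / 2)) := by
  have hπ : (1:ℝ) < Real.pi := by linarith [Real.pi_gt_three]
  have hc : 0 < Real.log Real.pi / 2 := by
    have := Real.log_pos hπ; linarith
  rcases hF with rfl | rfl
  · have hk := key (Real.log Real.pi / 2) hc (fun x => 1 / (12 * x + 1))
      (fun x hx => by positivity)
      (fun x y hx hxy => by
        apply one_div_lt_one_div_of_lt <;> linarith)
      (by
        have h12 : Tendsto (fun x : ℝ => 12 * x + 1) atTop atTop :=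
          tendsto_atTop_add_const_right atTop 1 (tendsto_id.const_mul_atTop (by norm_num))
        exact h12.inv_tendsto_atTop.congr fun x => by simp [one_div])
    constructor
    · intro x hx y hy hxy
      have hx0 : 0 < x := hc.trans hx
      have hy0 : 0 < y := hc.trans hy
      have := hk.1 hx hy hxy
      simpa [eqL hx0, eqL hy0] using this
    · refine hk.2.congr' ?_
      filter_upwards [eventually_gt_atTop 0] with x hx
      rw [eqL hx]
  · have hk := key (Real.log Real.pi / 2) hc (fun x => 1 / (12 * x))
      (fun x hx => by positivity)
      (fun x y hx hxy => by
        apply one_div_lt_one_div_of_lt <;> linarith)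
      (by
        have h12 : Tendsto (fun x : ℝ => 12 * x) atTop atTop :=
          tendsto_id.const_mul_atTop (by norm_num)
        exact h12.inv_tendsto_atTop.congr fun x => by simp [one_div])
    constructor
    · intro x hx y hy hxy
      have hx0 : 0 < x := hc.trans hx
      have hy0 : 0 < y := hc.trans hy
      have := hk.1 hx hy hxy
      simpa [eqR hx0, eqR hy0] using this
    · refine hk.2.congr' ?_
      filter_upwards [eventually_gt_atTop 0] with x hx
      rw [eqR hx]
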